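/- Let O_E be the ring of integers of a number field E, let 𝒜 ⊆ ℳ be O_E-orders of full rank in a semisimple E-algebra A, and let X, Y be locally free 𝒜-lattices of the same rank d inside the same E-vector space V with Y ⊆ X. If ℳY = ℳX (as sublattices of V), then Y = X. -/

import Mathlib

set_option linter.unusedSectionVars false
set_option linter.unusedVariables false


open scoped NumberField

section

variable (E : Type*) [Field E] [NumberField E]
variable (A : Type*) [Ring A] [Algebra E A]

/-- The ring of integers of `E` acts on any `E`-algebra `A`. -/
noncomputable instance algebraOEA : Algebra (𝓞 E) A :=
  RingHom.toAlgebra' ((algebraMap E A).comp (algebraMap (𝓞 E) E))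
    (fun c x => by
      simpa only [RingHom.comp_apply] using (Algebra.commutes (algebraMap (𝓞 E) E c) x))

variable (V : Type*) [AddCommGroup V] [Module E V] [Module A V] [IsScalarTower E A V]

/-- The ring of integers of `E` acts on any `E`-vector space. -/
noncomputable instance (priority := 50) moduleOEV {E : Type*} [Field E] [NumberField E]
    (W : Type*) [AddCommGroup W] [Module E W] : Module (𝓞 E) W :=
  Module.compHom W (algebraMap (𝓞 E) E)

variable {E A V}

/-- An `𝓞 E`-order of full rank in `A`: a subalgebra which is a finitely generated
`𝓞 E`-module spanning `A` over `E`. -/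
def IsOrder (𝒜 : Subalgebra (𝓞 E) A) : Prop :=
  (Subalgebra.toSubmodule 𝒜).FG ∧ Submodule.span E (𝒜 : Set A) = ⊤

/-- A maximal `𝓞 E`-order in `A`. -/
def IsMaximalOrder (ℳ : Subalgebra (𝓞 E) A) : Prop :=
  IsOrder ℳ ∧ ∀ ℳ' : Subalgebra (𝓞 E) A, IsOrder ℳ' → ℳ ≤ ℳ' → ℳ' = ℳ

/-- An `𝒜`-lattice: an `𝓞 E`-submodule of an `A`-module `V` which is finitely generated
and torsion-free over `𝓞 E` and stable under the order `𝒜`. -/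
def IsALattice (𝒜 : Subalgebra (𝓞 E) A) (X : Submodule (𝓞 E) V) : Prop :=
  X.FG ∧ (∀ (r : 𝓞 E) (x : V), x ∈ X → r • x = 0 → r = 0 ∨ x = 0) ∧
    ∀ a ∈ 𝒜, ∀ x ∈ X, a • x ∈ X

/-- `α : Fin d → V` is a free basis of the set `Y ⊆ V` over the set of scalars `S ⊆ A`,
i.e. `Y = S•α 1 ⊕ ⋯ ⊕ S•α d` with the summands free. -/
def IsBasisOf {d : ℕ} (S : Set A) (Y : Set V) (α : Fin d → V) : Prop :=
  (∀ lam : Fin d → A, (∀ i, lam i ∈ S) → ∑ i, lam i • α i ∈ Y) ∧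
  (∀ y ∈ Y, ∃ lam : Fin d → A, (∀ i, lam i ∈ S) ∧ y = ∑ i, lam i • α i) ∧
  (∀ lam : Fin d → A, (∀ i, lam i ∈ S) → ∑ i, lam i • α i = 0 → ∀ i, lam i = 0)

/-- `Y` is a free module of rank `d` over the set of scalars `S ⊆ A`. -/
def IsFreeOfRank (S : Set A) (Y : Set V) (d : ℕ) : Prop :=
  ∃ α : Fin d → V, (∀ i, α i ∈ Y) ∧ IsBasisOf S Y α

/-- Localization at the prime `𝔭` of a subset of `A`, inside `A`. -/
def localizeA (𝔭 : Ideal (𝓞 E)) (S : Set A) : Set A :=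
  {a | ∃ s : 𝓞 E, s ∉ 𝔭 ∧ s • a ∈ S}

/-- Localization at the prime `𝔭` of a subset of `V`, inside `V`. -/
def localizeV (𝔭 : Ideal (𝓞 E)) (Y : Set V) : Set V :=
  {v | ∃ s : 𝓞 E, s ∉ 𝔭 ∧ s • v ∈ Y}

/-- `Y` is locally free of rank `d` over the order (given as the set `S`): at every nonzero
prime `𝔭` of `𝓞 E` the localization `Y_𝔭` is free of rank `d` over `S_𝔭`. -/
def IsLocallyFreeOfRank (S : Set A) (Y : Set V) (d : ℕ) : Prop :=
  ∀ 𝔭 : Ideal (𝓞 E), 𝔭.IsPrime → 𝔭 ≠ ⊥ →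
    IsFreeOfRank (localizeA 𝔭 S) (localizeV 𝔭 Y) d

/-- The `S`-span `S·Y` of a subset `Y ⊆ V`, for a set of scalars `S ⊆ A`:
all finite sums `∑ λᵢ • xᵢ` with `λᵢ ∈ S`, `xᵢ ∈ Y`. -/
def spanSet (S : Set A) (Y : Set V) : Set V :=
  {v | ∃ (m : ℕ) (lam : Fin m → A) (x : Fin m → V),
    (∀ i, lam i ∈ S) ∧ (∀ i, x i ∈ Y) ∧ v = ∑ i, lam i • x i}

/-! ### Auxiliary lemmas -/

lemma smulA_def (r : 𝓞 E) (a : A) : r • a = (algebraMap (𝓞 E) E r) • a := by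
  rw [Algebra.smul_def (algebraMap (𝓞 E) E r) a]; rfl

lemma smulV_def (r : 𝓞 E) (v : V) : r • v = (algebraMap (𝓞 E) E r) • v := rfl

variable {𝔭 : Ideal (𝓞 E)}

lemma aux_one_not_mem (hp : 𝔭.IsPrime) : (1 : 𝓞 E) ∉ 𝔭 :=
  fun h => hp.ne_top ((Ideal.eq_top_iff_one _).mpr h)

lemma aux_mul_not_mem (hp : 𝔭.IsPrime) {s t : 𝓞 E} (hs : s ∉ 𝔭) (ht : t ∉ 𝔭) : s * t ∉ 𝔭 :=
  fun h => ((hp.mem_or_mem h).elim hs ht)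

lemma aux_self_subset (hp : 𝔭.IsPrime) (𝒜 : Subalgebra (𝓞 E) A) :
    (𝒜 : Set A) ⊆ localizeA 𝔭 (𝒜 : Set A) :=
  fun a ha => ⟨1, aux_one_not_mem hp, by rw [one_smul]; exact ha⟩

lemma aux_locA_mono {𝒜 ℳ : Subalgebra (𝓞 E) A} (h : 𝒜 ≤ ℳ) :
    localizeA 𝔭 (𝒜 : Set A) ⊆ localizeA 𝔭 (ℳ : Set A) :=
  fun _ ⟨s, hs, hsa⟩ => ⟨s, hs, h hsa⟩

lemma aux_add_mem (hp : 𝔭.IsPrime) {𝒜 : Subalgebra (𝓞 E) A} {a b : A}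
    (ha : a ∈ localizeA 𝔭 (𝒜 : Set A)) (hb : b ∈ localizeA 𝔭 (𝒜 : Set A)) :
    a + b ∈ localizeA 𝔭 (𝒜 : Set A) := by
  obtain ⟨s, hs, hsa⟩ := ha
  obtain ⟨t, ht, htb⟩ := hb
  refine ⟨s * t, aux_mul_not_mem hp hs ht, ?_⟩
  rw [smul_add]
  exact add_mem (by rw [mul_comm, mul_smul]; exact Subalgebra.smul_mem _ hsa t)
    (by rw [mul_smul]; exact Subalgebra.smul_mem _ htb s)

lemma aux_mul_mem (hp : 𝔭.IsPrime) {𝒜 : Subalgebra (𝓞 E) A} {a b : A}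
    (ha : a ∈ localizeA 𝔭 (𝒜 : Set A)) (hb : b ∈ localizeA 𝔭 (𝒜 : Set A)) :
    a * b ∈ localizeA 𝔭 (𝒜 : Set A) := by
  obtain ⟨s, hs, hsa⟩ := ha
  obtain ⟨t, ht, htb⟩ := hb
  refine ⟨s * t, aux_mul_not_mem hp hs ht, ?_⟩
  have : (s * t) • (a * b) = (s • a) * (t • b) := by
    rw [smulA_def, smulA_def, smulA_def, smul_mul_smul_comm, map_mul]
  rw [this]
  exact mul_mem hsa htb

lemma aux_zero_mem (hp : 𝔭.IsPrime) (𝒜 : Subalgebra (𝓞 E) A) :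
    (0 : A) ∈ localizeA 𝔭 (𝒜 : Set A) :=
  aux_self_subset hp 𝒜 (zero_mem _)

lemma aux_sum_mem (hp : 𝔭.IsPrime) {𝒜 : Subalgebra (𝓞 E) A} {ι : Type*} (s : Finset ι)
    (f : ι → A) (h : ∀ i ∈ s, f i ∈ localizeA 𝔭 (𝒜 : Set A)) :
    ∑ i ∈ s, f i ∈ localizeA 𝔭 (𝒜 : Set A) :=
  Finset.sum_induction f _ (fun _ _ => aux_add_mem hp) (aux_zero_mem hp 𝒜) h

lemma aux_mulMS_mem (hp : 𝔭.IsPrime) {𝒜 ℳ : Subalgebra (𝓞 E) A} (hAM : 𝒜 ≤ ℳ) {m a : A}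
    (hm : m ∈ ℳ) (ha : a ∈ localizeA 𝔭 (𝒜 : Set A)) :
    m * a ∈ localizeA 𝔭 (ℳ : Set A) := by
  obtain ⟨s, hs, hsa⟩ := ha
  refine ⟨s, hs, ?_⟩
  have : s • (m * a) = m * (s • a) := by
    rw [smulA_def, smulA_def, mul_smul_comm]
  rw [this]
  exact mul_mem hm (hAM hsa)

lemma aux_inv_smul_mem (hp : 𝔭.IsPrime) {ℳ : Subalgebra (𝓞 E) A} {s : 𝓞 E} (hs : s ∉ 𝔭)
    {t : A} (ht : t ∈ localizeA 𝔭 (ℳ : Set A)) :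
    ((algebraMap (𝓞 E) E s)⁻¹ : E) • t ∈ localizeA 𝔭 (ℳ : Set A) := by
  obtain ⟨u, hu, hut⟩ := ht
  refine ⟨u * s, aux_mul_not_mem hp hu hs, ?_⟩
  have hsne : algebraMap (𝓞 E) E s ≠ 0 := by
    refine (map_ne_zero_iff _ (haveI : IsFractionRing (𝓞 E) E := NumberField.RingOfIntegers.instIsFractionRing; IsFractionRing.injective (𝓞 E) E)).mpr ?_
    rintro rfl; exact hs (zero_mem 𝔭)
  have : (u * s) • (((algebraMap (𝓞 E) E s)⁻¹ : E) • t) = u • t := by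
    rw [smulA_def, smulA_def, smul_smul, map_mul, mul_assoc,
      mul_inv_cancel₀ hsne, mul_one]
  rw [this]
  exact hut

lemma aux_locV_mono {Y X : Set V} (h : Y ⊆ X) : localizeV 𝔭 Y ⊆ localizeV 𝔭 X :=
  fun _ ⟨s, hs, hsv⟩ => ⟨s, hs, h hsv⟩

lemma aux_locV_self (hp : 𝔭.IsPrime) {Y : Set V} : Y ⊆ localizeV 𝔭 Y :=
  fun v hv => ⟨1, aux_one_not_mem hp, by rw [one_smul]; exact hv⟩

lemma aux_exists_smul {𝒜 : Subalgebra (𝓞 E) A}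
    (h : Submodule.span E (𝒜 : Set A) = ⊤) (a : A) :
    ∃ s : 𝓞 E, s ≠ 0 ∧ s • a ∈ 𝒜 := by
  have ha : a ∈ Submodule.span E (𝒜 : Set A) := h ▸ Submodule.mem_top
  induction ha using Submodule.span_induction with
  | mem x hx => exact ⟨1, one_ne_zero, by rw [one_smul]; exact hx⟩
  | zero => exact ⟨1, one_ne_zero, by rw [one_smul]; exact zero_mem _⟩
  | add x y _ _ hx hy =>
    obtain ⟨s, hs, hsx⟩ := hx
    obtain ⟨t, ht, hty⟩ := hy
    refine ⟨s * t, mul_ne_zero hs ht, ?_⟩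
    rw [smul_add]
    exact add_mem (by rw [mul_comm, mul_smul]; exact Subalgebra.smul_mem _ hsx t)
      (by rw [mul_smul]; exact Subalgebra.smul_mem _ hty s)
  | smul e x _ hx =>
    obtain ⟨s, hs, hsx⟩ := hx
    haveI : IsFractionRing (𝓞 E) E := NumberField.RingOfIntegers.instIsFractionRing
    obtain ⟨⟨r, t⟩, hrt⟩ := IsLocalization.surj (nonZeroDivisors (𝓞 E)) e
    refine ⟨t * s, mul_ne_zero (nonZeroDivisors.ne_zero t.2) hs, ?_⟩
    have : ((t : 𝓞 E) * s) • (e • x) = r • (s • x) := by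
      have hrt' : e * algebraMap (𝓞 E) E (t : 𝓞 E) = algebraMap (𝓞 E) E r := hrt
      rw [smulA_def, smulA_def, smulA_def, smul_smul, smul_smul, map_mul, mul_assoc,
        mul_comm (algebraMap (𝓞 E) E s) e, ← mul_assoc, mul_comm (algebraMap (𝓞 E) E (t : 𝓞 E)) e,
        hrt']
    rw [this]
    exact Subalgebra.smul_mem _ hsx r

lemma aux_ne_zero_E {s : 𝓞 E} (hs : s ≠ 0) : algebraMap (𝓞 E) E s ≠ 0 :=
  (map_ne_zero_iff _ (haveI : IsFractionRing (𝓞 E) E := NumberField.RingOfIntegers.instIsFractionRing; IsFractionRing.injective (𝓞 E) E)).mpr hs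

/-- Upgrade linear independence over the localized order to independence over all of `A`. -/
lemma aux_indep (hp : 𝔭.IsPrime) {𝒜 : Subalgebra (𝓞 E) A}
    (h : Submodule.span E (𝒜 : Set A) = ⊤) {d : ℕ} {α : Fin d → V}
    (h3 : ∀ lam : Fin d → A, (∀ i, lam i ∈ localizeA 𝔭 (𝒜 : Set A)) →
      ∑ i, lam i • α i = 0 → ∀ i, lam i = 0)
    (lam : Fin d → A) (hsum : ∑ i, lam i • α i = 0) : ∀ i, lam i = 0 := by
  choose s hs hsmem using fun i => aux_exists_smul (𝒜 := 𝒜) h (lam i)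
  set S : 𝓞 E := ∏ i, s i with hS
  have hSne : S ≠ 0 := Finset.prod_ne_zero_iff.mpr fun i _ => hs i
  have hmem : ∀ i, S • lam i ∈ 𝒜 := by
    intro i
    rw [hS, ← Finset.mul_prod_erase Finset.univ s (Finset.mem_univ i), mul_comm, mul_smul]
    exact Subalgebra.smul_mem _ (hsmem i) _
  have hzero : ∑ i, (S • lam i) • α i = 0 := by
    have : ∀ i, (S • lam i) • α i = S • (lam i • α i) := by
      intro i
      rw [smulA_def, smulV_def, smul_assoc]
    rw [Finset.sum_congr rfl fun i _ => this i, ← Finset.smul_sum, hsum, smul_zero]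
  have hall := h3 (fun i => S • lam i)
    (fun i => ⟨1, aux_one_not_mem hp, by rw [one_smul]; exact hmem i⟩) hzero
  intro i
  have h0 : (algebraMap (𝓞 E) E S) • lam i = 0 := by rw [← smulA_def]; exact hall i
  have := congrArg (fun z => (algebraMap (𝓞 E) E S)⁻¹ • z) h0
  simpa [smul_smul, inv_mul_cancel₀ (aux_ne_zero_E hSne)] using this

/-- Core local argument: a matrix `b` with entries in the localized maximal order `ℳ_𝔭`,
admitting a right inverse `c` with entries in the localized order `𝒜_𝔭`, has entries
in `𝒜_𝔭`. -/
lemma aux_matrix (hp : 𝔭.IsPrime) {𝒜 ℳ : Subalgebra (𝓞 E) A} (hAM : 𝒜 ≤ ℳ)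
    (hMfg : (Subalgebra.toSubmodule ℳ).FG) {d : ℕ} (b c : Fin d → Fin d → A)
    (hb : ∀ i j, b i j ∈ localizeA 𝔭 (ℳ : Set A))
    (hc : ∀ i j, c i j ∈ localizeA 𝔭 (𝒜 : Set A))
    (hbc : ∀ i k, ∑ j, b i j * c j k = (if i = k then 1 else 0)) :
    ∀ i j, b i j ∈ localizeA 𝔭 (𝒜 : Set A) := by
  classical
  set R := Localization.AtPrime 𝔭 with hR
  have hunit : ∀ y : 𝔭.primeCompl, IsUnit (algebraMap (𝓞 E) E (y : 𝓞 E)) := by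
    intro y
    exact isUnit_iff_ne_zero.mpr (aux_ne_zero_E fun h0 => y.2 (by rw [h0]; exact zero_mem 𝔭))
  let ρ : R →+* E := IsLocalization.lift hunit
  letI : Module R A := Module.compHom A ρ
  have hsmul : ∀ (r : R) (a : A), r • a = ρ r • a := fun _ _ => rfl
  have hρ : ∀ u : 𝓞 E, ρ (algebraMap (𝓞 E) R u) = algebraMap (𝓞 E) E u :=
    fun u => IsLocalization.lift_eq hunit u
  have hsmulO : ∀ (u : 𝓞 E) (a : A), (algebraMap (𝓞 E) R u) • a = u • a := by
    intro u a
    rw [hsmul, hρ, smulA_def]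
  -- the localizations of the two orders, as `R`-submodules of `A`
  have smul_mem_loc : ∀ (𝒞 : Subalgebra (𝓞 E) A) (r : R) (a : A),
      a ∈ localizeA 𝔭 (𝒞 : Set A) → r • a ∈ localizeA 𝔭 (𝒞 : Set A) := by
    rintro 𝒞 r a ⟨s', hs', hsa⟩
    obtain ⟨⟨x, y⟩, hxy⟩ := IsLocalization.mk'_surjective 𝔭.primeCompl r
    have h1 := congrArg ρ (IsLocalization.mk'_spec R x y)
    rw [map_mul, hρ, hρ] at h1
    rw [← hxy]
    have hy : (y : 𝓞 E) ∉ 𝔭 := y.2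
    refine ⟨(y : 𝓞 E) * s', aux_mul_not_mem hp hy hs', ?_⟩
    have key : ((y : 𝓞 E) * s') • (IsLocalization.mk' R x y • a) = x • (s' • a) := by
      rw [hsmul, smulA_def, smulA_def, smulA_def, smul_smul, smul_smul, map_mul]
      congr 1
      rw [← h1]; ring
    rw [key]
    exact Subalgebra.smul_mem _ hsa x
  let Ssub : Submodule R A :=
    { carrier := localizeA 𝔭 (𝒜 : Set A)
      add_mem' := fun ha hb' => aux_add_mem hp ha hb'
      zero_mem' := aux_zero_mem hp 𝒜
      smul_mem' := fun r a ha => smul_mem_loc 𝒜 r a ha }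
  let Tsub : Submodule R A :=
    { carrier := localizeA 𝔭 (ℳ : Set A)
      add_mem' := fun ha hb' => aux_add_mem hp ha hb'
      zero_mem' := aux_zero_mem hp ℳ
      smul_mem' := fun r a ha => smul_mem_loc ℳ r a ha }
  -- `Tsub` is finitely generated over `R`
  obtain ⟨G, hG⟩ := hMfg
  have hTfg : Tsub.FG := by
    refine ⟨G, le_antisymm (Submodule.span_le.mpr fun g hg => ?_) (fun a ha => ?_)⟩
    · have hg' : g ∈ Submodule.span (𝓞 E) (G : Set A) := Submodule.subset_span hg
      rw [hG] at hg'
      exact aux_self_subset hp ℳ ((Subalgebra.mem_toSubmodule ℳ).mp hg')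
    · obtain ⟨s, hs, hsa⟩ := ha
      have hsub : ∀ m ∈ Submodule.span (𝓞 E) (G : Set A), m ∈ Submodule.span R (G : Set A) := by
        intro m hm
        induction hm using Submodule.span_induction with
        | mem x hx => exact Submodule.subset_span hx
        | zero => exact zero_mem _
        | add x y _ _ hx hy => exact add_mem hx hy
        | smul u x _ hx =>
          have huo : u • x = (algebraMap (𝓞 E) R u) • x := (hsmulO u x).symm
          rw [huo]; exact Submodule.smul_mem _ _ hx
      have hspan : s • a ∈ Submodule.span R (G : Set A) := by
        refine hsub _ ?_
        rw [hG]
        exact (Subalgebra.mem_toSubmodule ℳ).mpr hsa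
      have ha' : a = IsLocalization.mk' R 1 (⟨s, hs⟩ : 𝔭.primeCompl) • (s • a) := by
        have h1 := congrArg ρ (IsLocalization.mk'_spec R 1 (⟨s, hs⟩ : 𝔭.primeCompl))
        rw [map_mul, hρ, hρ, map_one] at h1
        rw [hsmul, smulA_def, smul_smul, h1, one_smul]
      rw [ha']
      exact Submodule.smul_mem _ _ hspan
  -- the ambient module `W = A^d` and the lattices `L ⊆ N`
  let W := Fin d → A
  let L : Submodule R W := Submodule.pi Set.univ fun _ => Ssub
  let N : Submodule R W := Submodule.pi Set.univ fun _ => Tsub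
  have hLN : L ≤ N := fun x hx k hk =>
    aux_locA_mono hAM (hx k hk)
  haveI hNfin : Module.Finite R N :=
    Module.Finite.iff_fg.mpr (Submodule.fg_pi fun _ => hTfg)
  -- right multiplication by the matrix `c`
  let φ : W →ₗ[R] W :=
    { toFun := fun x k => ∑ j, x j * c j k
      map_add' := by
        intro x y
        funext k
        show ∑ j, (x j + y j) * c j k = (∑ j, x j * c j k) + ∑ j, y j * c j k
        simp [add_mul, Finset.sum_add_distrib]
      map_smul' := by
        intro r x
        funext k
        simp only [RingHom.id_apply]
        have : ∀ j, (r • x) j * c j k = r • (x j * c j k) := by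
          intro j
          show (r • x j) * c j k = r • (x j * c j k)
          rw [hsmul, hsmul, smul_mul_assoc]
        rw [Finset.sum_congr rfl fun j _ => this j]
        exact (Finset.smul_sum).symm }
  have hφL : ∀ x ∈ L, φ x ∈ L := by
    intro x hx
    rw [Submodule.mem_pi] at hx ⊢
    intro k _
    show ∑ j, x j * c j k ∈ localizeA 𝔭 (𝒜 : Set A)
    exact aux_sum_mem hp _ _ fun j _ => aux_mul_mem hp (hx j (Set.mem_univ j)) (hc j k)
  have hφN : ∀ x ∈ N, φ x ∈ N := by
    intro x hx
    rw [Submodule.mem_pi] at hx ⊢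
    intro k _
    show ∑ j, x j * c j k ∈ localizeA 𝔭 (ℳ : Set A)
    exact aux_sum_mem hp _ _ fun j _ =>
      aux_mul_mem hp (hx j (Set.mem_univ j)) (aux_locA_mono hAM (hc j k))
  have hφNsurj : ∀ x ∈ N, ∃ y ∈ N, φ y = x := by
    intro x hx
    rw [Submodule.mem_pi] at hx
    refine ⟨fun k => ∑ j, x j * b j k, Submodule.mem_pi.mpr fun k _ => aux_sum_mem hp _ _ fun j _ =>
      aux_mul_mem hp (hx j (Set.mem_univ j)) (hb j k), ?_⟩
    funext l
    show ∑ k, (∑ j, x j * b j k) * c k l = x l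
    calc ∑ k, (∑ j, x j * b j k) * c k l
        = ∑ k, ∑ j, x j * b j k * c k l :=
          Finset.sum_congr rfl fun k _ => Finset.sum_mul ..
      _ = ∑ j, ∑ k, x j * b j k * c k l := Finset.sum_comm
      _ = ∑ j, x j * (∑ k, b j k * c k l) := by
          refine Finset.sum_congr rfl fun j _ => ?_
          rw [Finset.mul_sum]
          exact Finset.sum_congr rfl fun k _ => by rw [mul_assoc]
      _ = x l := by
          rw [Finset.sum_congr rfl fun j (_ : j ∈ (Finset.univ : Finset (Fin d))) =>
            by rw [hbc j l]]
          simp [mul_ite, Finset.sum_ite_eq']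
  -- pass to the quotient `N ⧸ L` and use the Orzech property
  let L' : Submodule R N := L.comap N.subtype
  let ψ : N →ₗ[R] N := φ.restrict (fun x hx => hφN x hx)
  have hψ : ∀ x : N, (ψ x : W) = φ (x : W) := fun x => rfl
  have hψL' : L' ≤ L'.comap ψ := by
    intro x hx
    rw [Submodule.mem_comap]
    show (ψ x : W) ∈ L
    rw [hψ]
    exact hφL _ (Submodule.mem_comap.mp hx)
  haveI : Module.Finite R (N ⧸ L') :=
    Module.Finite.of_surjective L'.mkQ (Submodule.mkQ_surjective L')
  let φq : (N ⧸ L') →ₗ[R] (N ⧸ L') := Submodule.mapQ L' L' ψ hψL'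
  have hsurj : Function.Surjective φq := by
    intro q
    obtain ⟨n, rfl⟩ := Submodule.mkQ_surjective L' q
    obtain ⟨y, hyN, hy⟩ := hφNsurj (n : W) n.2
    refine ⟨Submodule.Quotient.mk (⟨y, hyN⟩ : N), ?_⟩
    show Submodule.mapQ L' L' ψ hψL' (Submodule.Quotient.mk ⟨y, hyN⟩) = L'.mkQ n
    rw [Submodule.mapQ_apply]
    have : ψ ⟨y, hyN⟩ = n := Subtype.ext (by rw [hψ]; exact hy)
    rw [this]
    rfl
  have hinj : Function.Injective φq :=
    OrzechProperty.injective_of_surjective_endomorphism φq hsurj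
  intro i j
  have hbiN : (fun j => b i j) ∈ N := Submodule.mem_pi.mpr fun k _ => hb i k
  have heL : (fun k => if i = k then (1 : A) else 0) ∈ L := by
    refine Submodule.mem_pi.mpr fun k _ => ?_
    by_cases h : i = k
    · simp only [h, if_pos rfl]
      exact aux_self_subset hp 𝒜 (one_mem 𝒜)
    · simp only [if_neg h]
      exact aux_zero_mem hp 𝒜
  have heN : (fun k => if i = k then (1 : A) else 0) ∈ N := hLN heL
  have hφb : φ (fun j => b i j) = fun k => if i = k then 1 else 0 := by
    funext k
    show ∑ j, b i j * c j k = _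
    exact hbc i k
  have h0 : φq (Submodule.Quotient.mk ⟨fun j => b i j, hbiN⟩) = 0 := by
    show Submodule.mapQ L' L' ψ hψL' (Submodule.Quotient.mk ⟨fun j => b i j, hbiN⟩) = 0
    rw [Submodule.mapQ_apply]
    have : ψ ⟨fun j => b i j, hbiN⟩ = ⟨fun k => if i = k then 1 else 0, heN⟩ :=
      Subtype.ext (by rw [hψ]; exact hφb)
    rw [this]
    exact (Submodule.Quotient.mk_eq_zero _).mpr (Submodule.mem_comap.mpr heL)
  have hmk : Submodule.Quotient.mk (p := L') ⟨fun j => b i j, hbiN⟩ = 0 :=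
    hinj (by rw [h0, map_zero])
  have hmemL : (fun j => b i j) ∈ L :=
    Submodule.mem_comap.mp ((Submodule.Quotient.mk_eq_zero _).mp hmk)
  exact Submodule.mem_pi.mp hmemL j (Set.mem_univ j)

/-- The local inclusion: at each nonzero prime, `X` is contained in the localization of `Y`. -/
lemma aux_local (𝒜 ℳ : Subalgebra (𝓞 E) A) (h𝒜 : IsOrder 𝒜) (hℳ : IsOrder ℳ) (h𝒜ℳ : 𝒜 ≤ ℳ)
    (X Y : Submodule (𝓞 E) V) (hYX : Y ≤ X) (d : ℕ)
    (hlfX : IsLocallyFreeOfRank (E := E) (𝒜 : Set A) (X : Set V) d)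
    (hlfY : IsLocallyFreeOfRank (E := E) (𝒜 : Set A) (Y : Set V) d)
    (hMXY : spanSet (ℳ : Set A) (Y : Set V) = spanSet (ℳ : Set A) (X : Set V))
    (hp : 𝔭.IsPrime) (hp0 : 𝔭 ≠ ⊥) :
    (X : Set V) ⊆ localizeV 𝔭 (Y : Set V) := by
  classical
  obtain ⟨α, hαmem, hα1, hα2, hα3⟩ := hlfX 𝔭 hp hp0
  obtain ⟨β, hβmem, hβ1, hβ2, hβ3⟩ := hlfY 𝔭 hp hp0
  -- the matrix `c` expressing `β` in terms of `α`
  have hβX : ∀ j, β j ∈ localizeV 𝔭 (X : Set V) :=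
    fun j => aux_locV_mono (fun v hv => hYX hv) (hβmem j)
  choose cc hcS hceq using fun j => hα2 (β j) (hβX j)
  -- the matrix `b` expressing `α` in terms of `β`, with entries in `ℳ_𝔭`
  have hbex : ∀ i, ∃ bi : Fin d → A,
      (∀ j, bi j ∈ localizeA 𝔭 (ℳ : Set A)) ∧ α i = ∑ j, bi j • β j := by
    intro i
    obtain ⟨s, hs, hsX⟩ := hαmem i
    have h1 : s • α i ∈ spanSet (ℳ : Set A) (X : Set V) :=
      ⟨1, fun _ => 1, fun _ => s • α i, fun _ => one_mem ℳ, fun _ => hsX,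
        by rw [Fin.sum_univ_one, one_smul]⟩
    rw [← hMXY] at h1
    obtain ⟨m, lam, yv, hlam, hyv, heq⟩ := h1
    choose μ hμS hμeq using fun k => hβ2 (yv k) (aux_locV_self hp (hyv k))
    have heq2 : s • α i = ∑ j, (∑ k, lam k * μ k j) • β j := by
      rw [heq]
      calc ∑ k, lam k • yv k = ∑ k, ∑ j, (lam k * μ k j) • β j := by
            refine Finset.sum_congr rfl fun k _ => ?_
            rw [hμeq k, Finset.smul_sum]
            exact Finset.sum_congr rfl fun j _ => (mul_smul _ _ _).symm
        _ = ∑ j, ∑ k, (lam k * μ k j) • β j := Finset.sum_comm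
        _ = ∑ j, (∑ k, lam k * μ k j) • β j :=
            Finset.sum_congr rfl fun j _ => (Finset.sum_smul).symm
    have htT : ∀ j, (∑ k, lam k * μ k j) ∈ localizeA 𝔭 (ℳ : Set A) :=
      fun j => aux_sum_mem hp _ _ fun k _ => aux_mulMS_mem hp h𝒜ℳ (hlam k) (hμS k j)
    have hsne := aux_ne_zero_E (s := s) (fun h => hs (h ▸ zero_mem 𝔭))
    refine ⟨fun j => ((algebraMap (𝓞 E) E s)⁻¹ : E) • (∑ k, lam k * μ k j),
      fun j => aux_inv_smul_mem hp hs (htT j), ?_⟩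
    have hsum : ∑ j, (((algebraMap (𝓞 E) E s)⁻¹ : E) • (∑ k, lam k * μ k j)) • β j
        = ((algebraMap (𝓞 E) E s)⁻¹ : E) • (s • α i) := by
      rw [heq2, Finset.smul_sum]
      exact Finset.sum_congr rfl fun j _ => smul_assoc _ _ _
    rw [hsum, smulV_def s (α i), smul_smul, inv_mul_cancel₀ hsne, one_smul]
  choose b hbT hbeq using hbex
  -- `b * c = 1`
  have hbc : ∀ i k, ∑ j, b i j * cc j k = (if i = k then 1 else 0) := by
    intro i k
    have hzero : ∑ k, ((∑ j, b i j * cc j k) - (if i = k then 1 else 0)) • α k = 0 := by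
      have e1 : ∑ k, (∑ j, b i j * cc j k) • α k = α i := by
        calc ∑ k, (∑ j, b i j * cc j k) • α k
            = ∑ k, ∑ j, (b i j * cc j k) • α k :=
              Finset.sum_congr rfl fun k _ => Finset.sum_smul
          _ = ∑ j, ∑ k, (b i j * cc j k) • α k := Finset.sum_comm
          _ = ∑ j, b i j • β j := by
              refine Finset.sum_congr rfl fun j _ => ?_
              rw [hceq j, Finset.smul_sum]
              exact Finset.sum_congr rfl fun k _ => mul_smul _ _ _
          _ = α i := (hbeq i).symm
      have e2 : ∑ k, (if i = k then (1 : A) else 0) • α k = α i := by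
        have he : ∀ k, (if i = k then (1 : A) else 0) • α k = if i = k then α k else 0 := by
          intro k; by_cases h : i = k <;> simp [h]
        rw [Finset.sum_congr rfl fun k _ => he k, Finset.sum_ite_eq]
        simp
      rw [Finset.sum_congr rfl fun k _ => sub_smul _ _ (α k), Finset.sum_sub_distrib,
        e1, e2, sub_self]
    exact sub_eq_zero.mp (aux_indep hp h𝒜.2 hα3 _ hzero k)
  -- by the core argument, `b` has entries in `𝒜_𝔭`
  have hbS : ∀ i j, b i j ∈ localizeA 𝔭 (𝒜 : Set A) :=
    aux_matrix hp h𝒜ℳ hℳ.1 b cc hbT hcS hbc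
  -- conclude
  intro x hx
  obtain ⟨lam, hlamS, hxeq⟩ := hα2 x (aux_locV_self hp hx)
  have hx2 : x = ∑ j, (∑ i, lam i * b i j) • β j := by
    rw [hxeq]
    calc ∑ i, lam i • α i = ∑ i, ∑ j, (lam i * b i j) • β j := by
          refine Finset.sum_congr rfl fun i _ => ?_
          rw [hbeq i, Finset.smul_sum]
          exact Finset.sum_congr rfl fun j _ => (mul_smul _ _ _).symm
      _ = ∑ j, ∑ i, (lam i * b i j) • β j := Finset.sum_comm
      _ = ∑ j, (∑ i, lam i * b i j) • β j :=
          Finset.sum_congr rfl fun j _ => (Finset.sum_smul).symm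
  rw [hx2]
  exact hβ1 _ (fun j => aux_sum_mem hp _ _ fun i _ => aux_mul_mem hp (hlamS i) (hbS i j))

/-- **Key step in Proposition 2.1.** If `Y ⊆ X` are locally free `𝒜`-lattices of the same
rank `d` in the same space `V` and `ℳY = ℳX`, then `Y = X`. -/
theorem sub_lattice_eq_of_maxOrder_span_eq [FiniteDimensional E A] [IsSemisimpleRing A]
    (𝒜 ℳ : Subalgebra (𝓞 E) A) (h𝒜 : IsOrder 𝒜) (hℳ : IsOrder ℳ) (h𝒜ℳ : 𝒜 ≤ ℳ)
    (X Y : Submodule (𝓞 E) V) (hX : IsALattice 𝒜 X) (hY : IsALattice 𝒜 Y) (hYX : Y ≤ X)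
    (d : ℕ)
    (hlfX : IsLocallyFreeOfRank (E := E) (𝒜 : Set A) (X : Set V) d)
    (hlfY : IsLocallyFreeOfRank (E := E) (𝒜 : Set A) (Y : Set V) d)
    (hMXY : spanSet (ℳ : Set A) (Y : Set V) = spanSet (ℳ : Set A) (X : Set V)) :
    Y = X := by
  refine le_antisymm hYX fun x hx => ?_
  -- the ideal of denominators of `x` relative to `Y`
  let I : Ideal (𝓞 E) :=
    { carrier := {s : 𝓞 E | s • x ∈ Y}
      add_mem' := fun {a b} ha hb => by
        show (a + b) • x ∈ Y
        rw [add_smul]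
        exact add_mem ha hb
      zero_mem' := by
        show (0 : 𝓞 E) • x ∈ Y
        rw [zero_smul]
        exact zero_mem Y
      smul_mem' := fun r s hs => by
        show (r * s) • x ∈ Y
        rw [mul_smul]
        exact Y.smul_mem r hs }
  have hI : I = ⊤ := by
    by_contra hne
    obtain ⟨𝔪, hmax, hIm⟩ := Ideal.exists_le_maximal I hne
    have hm0 : 𝔪 ≠ ⊥ :=
      Ring.ne_bot_of_isMaximal_of_not_isField hmax (NumberField.RingOfIntegers.not_isField E)
    obtain ⟨s, hs, hsx⟩ :=
      aux_local 𝒜 ℳ h𝒜 hℳ h𝒜ℳ X Y hYX d hlfX hlfY hMXY hmax.isPrime hm0 hx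
    exact hs (hIm hsx)
  have h1 : (1 : 𝓞 E) ∈ I := hI ▸ Submodule.mem_top
  have := h1
  rw [show ((1 : 𝓞 E) ∈ I) = ((1 : 𝓞 E) • x ∈ Y) from rfl] at this
  rwa [one_smul] at this

end
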